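/- Let I ⊆ ℝ be a nonempty open interval, let α : I → ℝ be three times continuously differentiable with α(t) ≠ 0 and α'(t) ≠ 0 for every t ∈ I, and let b₀, b₁ ∈ ℝ be constants such that for every t ∈ I: α'''(t)/α'(t) − 4·α''(t)/α(t) + 4·α'(t)²/α(t)² = b₀ and α'''(t)/α'(t) − 2·α''(t)/α(t) = b₁. Then b₁ = −b₀ and, for every t ∈ I, α''(t) = b₀·α(t) and α'(t)² = b₀·α(t)². -/

import Mathlib

/-- If `α` is `C³` on a nonempty open interval with `α ≠ 0`, `α' ≠ 0`, and
`α'''/α' − 4α''/α + 4α'²/α² = b₀` and `α'''/α' − 2α''/α = b₁` for constants `b₀, b₁`,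
then `b₁ = −b₀`, `α'' = b₀·α` and `α'² = b₀·α²` on the interval. -/
theorem two_constant_ode_identities (a b b₀ b₁ : ℝ) (hab : a < b) (α : ℝ → ℝ)
    (hα : ContDiffOn ℝ 3 α (Set.Ioo a b))
    (hα0 : ∀ t ∈ Set.Ioo a b, α t ≠ 0)
    (hα1 : ∀ t ∈ Set.Ioo a b, deriv α t ≠ 0)
    (h0 : ∀ t ∈ Set.Ioo a b,
      deriv (deriv (deriv α)) t / deriv α t - 4 * deriv (deriv α) t / α t
        + 4 * (deriv α t) ^ 2 / (α t) ^ 2 = b₀)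
    (h1 : ∀ t ∈ Set.Ioo a b,
      deriv (deriv (deriv α)) t / deriv α t - 2 * deriv (deriv α) t / α t = b₁) :
    b₁ = -b₀ ∧ ∀ t ∈ Set.Ioo a b,
      deriv (deriv α) t = b₀ * α t ∧ (deriv α t) ^ 2 = b₀ * (α t) ^ 2 := by
  have hopen : IsOpen (Set.Ioo a b) := isOpen_Ioo
  have hα' : ContDiffOn ℝ 2 (deriv α) (Set.Ioo a b) :=
    hα.deriv_of_isOpen hopen (by norm_num)
  have hα'' : ContDiffOn ℝ 1 (deriv (deriv α)) (Set.Ioo a b) :=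
    hα'.deriv_of_isOpen hopen (by norm_num)
  have hd : ∀ t ∈ Set.Ioo a b, HasDerivAt α (deriv α t) t := fun t ht =>
    ((hα.differentiableOn (by norm_num)).differentiableAt (hopen.mem_nhds ht)).hasDerivAt
  have hd2 : ∀ t ∈ Set.Ioo a b, HasDerivAt (deriv α) (deriv (deriv α) t) t := fun t ht =>
    ((hα'.differentiableOn (by norm_num)).differentiableAt (hopen.mem_nhds ht)).hasDerivAt
  have hd3 : ∀ t ∈ Set.Ioo a b,
      HasDerivAt (deriv (deriv α)) (deriv (deriv (deriv α)) t) t := fun t ht =>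
    ((hα''.differentiableOn (by norm_num)).differentiableAt (hopen.mem_nhds ht)).hasDerivAt
  set k := (b₁ - b₀) / 2 with hk
  -- Step 1: α''·α − 2·α'² = k·α² on the interval (pointwise algebra)
  have hg : Set.EqOn (fun t => deriv (deriv α) t * α t - 2 * (deriv α t) ^ 2)
      (fun t => k * (α t) ^ 2) (Set.Ioo a b) := by
    intro t ht
    have e0 := h0 t ht
    have e1 := h1 t ht
    have a0 := hα0 t ht
    have a1 := hα1 t ht
    simp only
    field_simp at e0 e1
    have hmul : (deriv (deriv α) t * α t - 2 * (deriv α t) ^ 2) * (2 * deriv α t * α t)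
        = k * (α t) ^ 2 * (2 * deriv α t * α t) := by
      rw [hk]; linear_combination (α t) ^ 2 * e1 - α t * e0
    exact mul_right_cancel₀ (mul_ne_zero (mul_ne_zero two_ne_zero a1) a0) hmul
  -- Step 2: α'' = b₀·α on the interval
  have h2 : ∀ t ∈ Set.Ioo a b, deriv (deriv α) t = b₀ * α t := by
    intro t ht
    have hderiv_eq :
        deriv (fun t => deriv (deriv α) t * α t - 2 * (deriv α t) ^ 2) t
          = deriv (fun t => k * (α t) ^ 2) t :=
      Filter.EventuallyEq.deriv_eq (Filter.eventuallyEq_of_mem (hopen.mem_nhds ht) hg)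
    have hL : HasDerivAt (fun t => deriv (deriv α) t * α t - 2 * (deriv α t) ^ 2)
        (deriv (deriv (deriv α)) t * α t + deriv (deriv α) t * deriv α t
          - 2 * ((2 : ℕ) * (deriv α t) ^ 1 * deriv (deriv α) t)) t :=
      ((hd3 t ht).mul (hd t ht)).sub (((hd2 t ht).pow 2).const_mul 2)
    have hR : HasDerivAt (fun t => k * (α t) ^ 2)
        (k * ((2 : ℕ) * (α t) ^ 1 * deriv α t)) t :=
      ((hd t ht).pow 2).const_mul k
    have hE : deriv (deriv (deriv α)) t * α t + deriv (deriv α) t * deriv α t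
          - 2 * ((2 : ℕ) * (deriv α t) ^ 1 * deriv (deriv α) t)
        = k * ((2 : ℕ) * (α t) ^ 1 * deriv α t) := by
      rw [← hL.deriv, ← hR.deriv]; exact hderiv_eq
    have e1 := h1 t ht
    have a0 := hα0 t ht
    have a1 := hα1 t ht
    field_simp at e1
    push_cast at hE
    have hcancel : deriv (deriv α) t * deriv α t = (b₁ - 2 * k) * α t * deriv α t := by
      linear_combination e1 - hE
    have hc : deriv (deriv α) t = (b₁ - 2 * k) * α t := mul_right_cancel₀ a1 hcancel
    rw [hc, hk]; ring
  -- Step 3: α''' = b₀·α' on the interval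
  have h3 : ∀ t ∈ Set.Ioo a b, deriv (deriv (deriv α)) t = b₀ * deriv α t := by
    intro t ht
    have hEq : Set.EqOn (deriv (deriv α)) (fun t => b₀ * α t) (Set.Ioo a b) := h2
    have hderiv_eq : deriv (deriv (deriv α)) t = deriv (fun t => b₀ * α t) t :=
      Filter.EventuallyEq.deriv_eq (Filter.eventuallyEq_of_mem (hopen.mem_nhds ht) hEq)
    rw [hderiv_eq, ((hd t ht).const_mul b₀).deriv]
  -- Step 4: α'² = b₀·α² on the interval
  have h4 : ∀ t ∈ Set.Ioo a b, (deriv α t) ^ 2 = b₀ * (α t) ^ 2 := by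
    intro t ht
    have e0 := h0 t ht
    have a0 := hα0 t ht
    have a1 := hα1 t ht
    rw [h3 t ht, h2 t ht] at e0
    field_simp at e0
    have hmul : (deriv α t) ^ 2 * (4 * α t) = b₀ * (α t) ^ 2 * (4 * α t) := by
      linear_combination α t * e0
    exact mul_right_cancel₀ (by positivity) hmul |>.trans rfl
  -- b₁ = -b₀ from a sample point
  have ht₀ : (a + b) / 2 ∈ Set.Ioo a b := ⟨by linarith, by linarith⟩
  have hb : b₁ = -b₀ := by
    have e1 := h1 _ ht₀
    have a0 := hα0 _ ht₀
    have a1 := hα1 _ ht₀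
    rw [h3 _ ht₀, h2 _ ht₀] at e1
    field_simp at e1
    have hmul : b₁ * α ((a + b) / 2) = -b₀ * α ((a + b) / 2) := by
      linear_combination -(α ((a + b) / 2)) * e1
    exact mul_right_cancel₀ a0 hmul
  exact ⟨hb, fun t ht => ⟨h2 t ht, h4 t ht⟩⟩
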